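/- Let f : I → ℝ be continuous at ω₀, and define F(x) := ∫_{ω₀}^{x} f(t) d_{q,ω}t for x ∈ I. Then F is continuous at ω₀, F is q,ω-differentiable on I, and D_{q,ω}F(x) = f(x) for every x ∈ I. -/

import Mathlib

open Filter Topology

noncomputable section

/-- The fixed point `ω₀ := ω/(1-q)` of `t ↦ qt + ω`. -/
def hahnOmega0 (q ω : ℝ) : ℝ := ω / (1 - q)

/-- The Hahn difference operator `D_{q,ω}`:
`D_{q,ω}f(t) = (f(qt+ω) - f t)/((qt+ω) - t)` for `t ≠ ω₀`, and the ordinary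
derivative at `t = ω₀`. -/
def hahnDeriv (q ω : ℝ) (f : ℝ → ℝ) (t : ℝ) : ℝ :=
  if t = hahnOmega0 q ω then deriv f t
  else (f (q * t + ω) - f t) / ((q * t + ω) - t)

/-- `f` is `q,ω`-differentiable at `t` (automatic off `ω₀`; at `ω₀` it means
ordinary (Fréchet) differentiability). -/
def HahnDiffAt (q ω : ℝ) (f : ℝ → ℝ) (t : ℝ) : Prop :=
  t = hahnOmega0 q ω → DifferentiableAt ℝ f t

/-- The point `x q^k + [k]_{q,ω}` where `[k]_{q,ω} = ω(1-q^k)/(1-q)`. -/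
def jnPoint (q ω x : ℝ) (k : ℕ) : ℝ := x * q ^ k + ω * (1 - q ^ k) / (1 - q)

/-- Partial sums of the Jackson–Nörlund series at `x`. -/
def jnPartial (q ω : ℝ) (f : ℝ → ℝ) (x : ℝ) (n : ℕ) : ℝ :=
  ∑ k ∈ Finset.range n, q ^ k * f (jnPoint q ω x k)

/-- Convergence of the Jackson–Nörlund series `Σ q^k f(x q^k + [k]_{q,ω})`. -/
def JNConvergesAt (q ω : ℝ) (f : ℝ → ℝ) (x : ℝ) : Prop :=
  ∃ S : ℝ, Tendsto (jnPartial q ω f x) atTop (𝓝 S)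

/-- The Jackson–Nörlund integral `∫_{ω₀}^{x} f(t) d_{q,ω}t`. -/
def jnSum (q ω : ℝ) (f : ℝ → ℝ) (x : ℝ) : ℝ :=
  (x * (1 - q) - ω) * limUnder atTop (jnPartial q ω f x)

/-- The Jackson–Nörlund integral `∫_{a}^{b} f(t) d_{q,ω}t`. -/
def jnIntegral (q ω : ℝ) (f : ℝ → ℝ) (a b : ℝ) : ℝ :=
  jnSum q ω f b - jnSum q ω f a

/-- The orbit `{q^n s + [n]_{q,ω} : n ∈ ℕ}`. -/
def qwOrbit (q ω s : ℝ) : Set ℝ := Set.range (jnPoint q ω s)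

/-- The orbit together with `ω₀`, i.e. `[s]_{q,ω}`. -/
def qwClosedOrbit (q ω s : ℝ) : Set ℝ := qwOrbit q ω s ∪ {hahnOmega0 q ω}

/-- The `q,ω`-interval `[a,b]_{q,ω}`. -/
def qwInterval (q ω a b : ℝ) : Set ℝ :=
  qwOrbit q ω a ∪ qwOrbit q ω b ∪ {hahnOmega0 q ω}

namespace JNAux

variable {q ω : ℝ}

lemma one_sub_q_ne (hq1 : q < 1) : (1:ℝ) - q ≠ 0 := by linarith

lemma jnPoint_sub (hq1 : q < 1) (x : ℝ) (k : ℕ) :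
    jnPoint q ω x k - hahnOmega0 q ω = q ^ k * (x - hahnOmega0 q ω) := by
  have h := one_sub_q_ne hq1
  unfold jnPoint hahnOmega0
  field_simp
  ring

lemma jnPoint_tendsto (hq0 : 0 < q) (hq1 : q < 1) (x : ℝ) :
    Filter.Tendsto (fun k => jnPoint q ω x k) Filter.atTop (nhds (hahnOmega0 q ω)) := by
  have h : Filter.Tendsto (fun k : ℕ => q ^ k * (x - hahnOmega0 q ω) + hahnOmega0 q ω)
      Filter.atTop (nhds (0 * (x - hahnOmega0 q ω) + hahnOmega0 q ω)) := by
    exact (((tendsto_pow_atTop_nhds_zero_of_lt_one hq0.le hq1).mul_const _).add_const _)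
  rw [zero_mul, zero_add] at h
  refine h.congr fun k => ?_
  have := jnPoint_sub (ω := ω) hq1 x k
  linarith

lemma summable_jn (hq0 : 0 < q) (hq1 : q < 1) (f : ℝ → ℝ)
    (hf : ContinuousAt f (hahnOmega0 q ω)) (x : ℝ) :
    Summable (fun k => q ^ k * f (jnPoint q ω x k)) := by
  have htend : Filter.Tendsto (fun k => f (jnPoint q ω x k)) Filter.atTop
      (nhds (f (hahnOmega0 q ω))) := hf.tendsto.comp (jnPoint_tendsto hq0 hq1 x)
  have hbd : ∀ᶠ k in Filter.atTop,
      ‖q ^ k * f (jnPoint q ω x k)‖ ≤ (|f (hahnOmega0 q ω)| + 1) * q ^ k := by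
    filter_upwards [htend (Metric.ball_mem_nhds _ one_pos)] with k hk
    have hk' : |f (jnPoint q ω x k) - f (hahnOmega0 q ω)| < 1 := by
      simpa [Real.dist_eq] using hk
    have h1 : |f (jnPoint q ω x k)| ≤ |f (hahnOmega0 q ω)| + 1 := by
      have := abs_sub_abs_le_abs_sub (f (jnPoint q ω x k)) (f (hahnOmega0 q ω))
      linarith
    have hq : |q ^ k| = q ^ k := abs_of_pos (pow_pos hq0 k)
    calc ‖q ^ k * f (jnPoint q ω x k)‖ = q ^ k * |f (jnPoint q ω x k)| := by
          rw [Real.norm_eq_abs, abs_mul, hq]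
      _ ≤ q ^ k * (|f (hahnOmega0 q ω)| + 1) := by
          exact mul_le_mul_of_nonneg_left h1 (pow_pos hq0 k).le
      _ = (|f (hahnOmega0 q ω)| + 1) * q ^ k := mul_comm _ _
  exact Summable.of_norm_bounded_eventually
    ((summable_geometric_of_lt_one hq0.le hq1).mul_left _)
    (by rwa [Nat.cofinite_eq_atTop])

/-- The sum of the JN series. -/
noncomputable def S (q ω : ℝ) (f : ℝ → ℝ) (x : ℝ) : ℝ :=
  ∑' k : ℕ, q ^ k * f (jnPoint q ω x k)

lemma jnSum_eq (hq0 : 0 < q) (hq1 : q < 1) (f : ℝ → ℝ)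
    (hf : ContinuousAt f (hahnOmega0 q ω)) (x : ℝ) :
    jnSum q ω f x = (x * (1 - q) - ω) * S q ω f x := by
  unfold jnSum
  congr 1
  exact Filter.Tendsto.limUnder_eq
    ((summable_jn hq0 hq1 f hf x).hasSum.tendsto_sum_nat)

lemma jnPoint_shift (hq1 : q < 1) (x : ℝ) (k : ℕ) :
    jnPoint q ω (q * x + ω) k = jnPoint q ω x (k + 1) := by
  have h := one_sub_q_ne hq1
  unfold jnPoint
  field_simp
  ring

lemma S_shift (hq0 : 0 < q) (hq1 : q < 1) (f : ℝ → ℝ)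
    (hf : ContinuousAt f (hahnOmega0 q ω)) (x : ℝ) :
    S q ω f x = f x + q * S q ω f (q * x + ω) := by
  have h0 : jnPoint q ω x 0 = x := by
    unfold jnPoint; simp
  have h1 := Summable.tsum_eq_zero_add (summable_jn hq0 hq1 f hf x)
  have h2 : ∑' k : ℕ, q ^ (k + 1) * f (jnPoint q ω x (k + 1))
      = q * S q ω f (q * x + ω) := by
    rw [show (fun k : ℕ => q ^ (k + 1) * f (jnPoint q ω x (k + 1)))
        = fun k : ℕ => q * (q ^ k * f (jnPoint q ω (q * x + ω) k)) from ?_]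
    · exact tsum_mul_left
    · funext k
      rw [jnPoint_shift hq1]
      ring
  rw [S, h1, h0, h2, pow_zero, one_mul]

lemma S_omega0 (hq0 : 0 < q) (hq1 : q < 1) (f : ℝ → ℝ) :
    S q ω f (hahnOmega0 q ω) = f (hahnOmega0 q ω) / (1 - q) := by
  have hpt : ∀ k : ℕ, jnPoint q ω (hahnOmega0 q ω) k = hahnOmega0 q ω := by
    intro k
    have := jnPoint_sub (ω := ω) hq1 (hahnOmega0 q ω) k
    simp at this
    linarith
  unfold S
  simp only [hpt]
  rw [show (fun k : ℕ => q ^ k * f (hahnOmega0 q ω))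
      = fun k : ℕ => f (hahnOmega0 q ω) * q ^ k from by funext k; ring,
    tsum_mul_left, tsum_geometric_of_lt_one hq0.le hq1]
  rw [div_eq_mul_inv, mul_comm]

lemma S_continuousAt (hq0 : 0 < q) (hq1 : q < 1) (f : ℝ → ℝ)
    (hf : ContinuousAt f (hahnOmega0 q ω)) :
    ContinuousAt (S q ω f) (hahnOmega0 q ω) := by
  have hq' : (0:ℝ) < 1 - q := by linarith
  rw [Metric.continuousAt_iff]
  intro ε hε
  have hε' : 0 < ε * (1 - q) / 2 := by positivity
  obtain ⟨δ, hδ, hδ'⟩ := Metric.continuousAt_iff.mp hf (ε * (1 - q) / 2) hε'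
  refine ⟨δ, hδ, fun {x} hx => ?_⟩
  set ε' := ε * (1 - q) / 2 with hε'def
  have hmem : ∀ k : ℕ, dist (f (jnPoint q ω x k)) (f (hahnOmega0 q ω)) < ε' := by
    intro k
    apply hδ'
    rw [Real.dist_eq, jnPoint_sub hq1]
    rw [Real.dist_eq] at hx
    calc |q ^ k * (x - hahnOmega0 q ω)| = q ^ k * |x - hahnOmega0 q ω| := by
          rw [abs_mul, abs_of_pos (pow_pos hq0 k)]
      _ ≤ 1 * |x - hahnOmega0 q ω| := by
          apply mul_le_mul_of_nonneg_right (pow_le_one₀ hq0.le hq1.le) (abs_nonneg _)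
      _ = |x - hahnOmega0 q ω| := one_mul _
      _ < δ := hx
  have hs1 := summable_jn hq0 hq1 f hf x
  have hs2 : Summable (fun k : ℕ => q ^ k * f (hahnOmega0 q ω)) := by
    have := (summable_geometric_of_lt_one hq0.le hq1).mul_right (f (hahnOmega0 q ω))
    simpa using this
  have hSω : S q ω f (hahnOmega0 q ω) = ∑' k : ℕ, q ^ k * f (hahnOmega0 q ω) := by
    unfold S
    congr 1
    funext k
    congr 1
    have := jnPoint_sub (ω := ω) hq1 (hahnOmega0 q ω) k
    simp at this
    congr 1
    linarith
  rw [Real.dist_eq, hSω, S, ← Summable.tsum_sub hs1 hs2]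
  have habs : Summable (fun k : ℕ =>
      |q ^ k * f (jnPoint q ω x k) - q ^ k * f (hahnOmega0 q ω)|) := by
    have := (hs1.sub hs2).abs
    simpa using this
  calc |∑' k : ℕ, (q ^ k * f (jnPoint q ω x k) - q ^ k * f (hahnOmega0 q ω))|
      ≤ ∑' k : ℕ, |q ^ k * f (jnPoint q ω x k) - q ^ k * f (hahnOmega0 q ω)| := by
        calc _ = ‖∑' k : ℕ, (q ^ k * f (jnPoint q ω x k) - q ^ k * f (hahnOmega0 q ω))‖ := (Real.norm_eq_abs _).symm
          _ ≤ _ := (norm_tsum_le_tsum_norm (by simpa [Real.norm_eq_abs] using habs)).trans (le_of_eq (by simp [Real.norm_eq_abs]))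
    _ ≤ ∑' k : ℕ, ε' * q ^ k := by
        apply Summable.tsum_le_tsum _ habs ((summable_geometric_of_lt_one hq0.le hq1).mul_left _)
        intro k
        rw [← mul_sub, abs_mul, abs_of_pos (pow_pos hq0 k)]
        rw [mul_comm]
        apply mul_le_mul_of_nonneg_right _ (pow_pos hq0 k).le
        exact (le_of_lt (by rw [← Real.dist_eq]; exact hmem k))
    _ = ε' * (1 - q)⁻¹ := by rw [tsum_mul_left, tsum_geometric_of_lt_one hq0.le hq1]
    _ = ε / 2 := by
        rw [hε'def]
        field_simp
    _ < ε := by linarith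

lemma F_hasDeriv (hq0 : 0 < q) (hq1 : q < 1) (f : ℝ → ℝ)
    (hf : ContinuousAt f (hahnOmega0 q ω)) :
    HasDerivAt (jnSum q ω f) (f (hahnOmega0 q ω)) (hahnOmega0 q ω) := by
  have hq' : (1:ℝ) - q ≠ 0 := one_sub_q_ne hq1
  rw [hasDerivAt_iff_tendsto_slope]
  have hF0 : jnSum q ω f (hahnOmega0 q ω) = 0 := by
    rw [jnSum_eq hq0 hq1 f hf]
    have : hahnOmega0 q ω * (1 - q) - ω = 0 := by
      unfold hahnOmega0; field_simp; ring
    rw [this, zero_mul]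
  have heq : ∀ x ∈ ({hahnOmega0 q ω}ᶜ : Set ℝ),
      slope (jnSum q ω f) (hahnOmega0 q ω) x = (1 - q) * S q ω f x := by
    intro x hx
    have hxne : x - hahnOmega0 q ω ≠ 0 := sub_ne_zero.mpr hx
    rw [slope_def_field, jnSum_eq hq0 hq1 f hf, hF0]
    have hc : x * (1 - q) - ω = (1 - q) * (x - hahnOmega0 q ω) := by
      unfold hahnOmega0; field_simp; try ring
    rw [hc]
    field_simp
    ring
  have hlim : Filter.Tendsto (fun x => (1 - q) * S q ω f x)
      (nhdsWithin (hahnOmega0 q ω) {hahnOmega0 q ω}ᶜ) (nhds (f (hahnOmega0 q ω))) := by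
    have h1 : ContinuousAt (fun x => (1 - q) * S q ω f x) (hahnOmega0 q ω) :=
      (continuousAt_const).mul (S_continuousAt hq0 hq1 f hf)
    have h2 := h1.continuousWithinAt (s := {hahnOmega0 q ω}ᶜ)
    have h3 : (1 - q) * S q ω f (hahnOmega0 q ω) = f (hahnOmega0 q ω) := by
      rw [S_omega0 hq0 hq1]; field_simp
    rw [ContinuousWithinAt, h3] at h2
    exact h2
  exact Filter.Tendsto.congr' (by
    filter_upwards [self_mem_nhdsWithin] with x hx
    exact (heq x hx).symm) hlim

end JNAux

/-- the Jackson–Nörlund indefinite integral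
`F(x) = ∫_{ω₀}^x f(t) d_{q,ω}t` of a function continuous at `ω₀` is continuous
at `ω₀`, `q,ω`-differentiable on `I`, and `D_{q,ω}F = f` on `I`. -/
theorem jn_fundamental_theorem (q ω : ℝ) (hq0 : 0 < q) (hq1 : q < 1)
    (hω : 0 < ω) (I : Set ℝ) (hI : I.OrdConnected) (hmem : hahnOmega0 q ω ∈ I)
    (f : ℝ → ℝ) (hf : ContinuousAt f (hahnOmega0 q ω)) :
    ContinuousAt (jnSum q ω f) (hahnOmega0 q ω) ∧
    ∀ x ∈ I, HahnDiffAt q ω (jnSum q ω f) x ∧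
      hahnDeriv q ω (jnSum q ω f) x = f x := by
  have hderiv := JNAux.F_hasDeriv hq0 hq1 f hf
  refine ⟨hderiv.continuousAt, fun x hx => ?_⟩
  refine ⟨fun hxeq => by rw [hxeq]; exact hderiv.differentiableAt, ?_⟩
  unfold hahnDeriv
  by_cases hc : x = hahnOmega0 q ω
  · rw [if_pos hc, hc, hderiv.deriv]
  · rw [if_neg hc]
    have hcne : x * (1 - q) - ω ≠ 0 := by
      have h1 : x * (1 - q) - ω = (1 - q) * (x - hahnOmega0 q ω) := by
        have hne : (1:ℝ) - q ≠ 0 := by linarith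
        unfold hahnOmega0
        field_simp
        try ring
      rw [h1]
      exact mul_ne_zero (by linarith) (sub_ne_zero.mpr hc)
    rw [JNAux.jnSum_eq hq0 hq1 f hf, JNAux.jnSum_eq hq0 hq1 f hf,
      show (q * x + ω) * (1 - q) - ω = q * (x * (1 - q) - ω) by ring,
      JNAux.S_shift hq0 hq1 f hf x,
      show q * x + ω - x = -(x * (1 - q) - ω) by ring,
      div_eq_iff (neg_ne_zero.mpr hcne)]
    ring
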